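/- Let Z be a global cross section with common isotropy subgroup G₀, and Z' = {g₀ n_z z : z ∈ Z} another global cross section with g₀ ∈ G, n_z ∈ N (normalizer of G₀). Write x ∈ X as x = gz = g'z' with z ∈ Z, z' = g₀ n_z z ∈ Z'. Then the equivariant parts satisfy y' = y n_z⁻¹ g₀⁻¹, where y = gG₀ ∈ G/G₀ and y' = g'G₀' ∈ G/G₀' with G₀' = g₀G₀g₀⁻¹; i.e., g'G₀' = gG₀ n_z⁻¹ g₀⁻¹ as subsets of G. -/

import Mathlib

/-- Transformation of the equivariant part: if `x = g • z = g' • (g₀ n_z • z)` with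
`z ∈ Z`, a global cross section with common isotropy subgroup `G₀`, and
`n_z` in the normalizer of `G₀`, then the equivariant parts satisfy
`y' = y n_z⁻¹ g₀⁻¹`, i.e. `g' G₀' = g G₀ n_z⁻¹ g₀⁻¹` as subsets of `G`, where
`G₀' = g₀ G₀ g₀⁻¹`. -/
theorem stmt9 {G X : Type*} [Group G] [MulAction G X] (Z : Set X) (G₀ : Subgroup G)
    (hcs : ∀ x : X, ∃! z, z ∈ Z ∧ z ∈ MulAction.orbit G x)
    (hglob : ∀ z ∈ Z, MulAction.stabilizer G z = G₀)
    (g₀ n g g' : G) (hn : n ∈ Subgroup.normalizer (G₀ : Set G)) (z : X) (hz : z ∈ Z)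
    (x : X) (hx1 : x = g • z) (hx2 : x = g' • ((g₀ * n) • z)) :
    (fun a => g' * a) ''
        ((Subgroup.map (MulAut.conj g₀).toMonoidHom G₀ : Subgroup G) : Set G) =
      (fun a => g * a * n⁻¹ * g₀⁻¹) '' (G₀ : Set G) := by
  have hstab : (g' * (g₀ * n))⁻¹ * g ∈ G₀ := by
    rw [← hglob z hz]
    have hzz : g • z = (g' * (g₀ * n)) • z := by
      rw [mul_smul, ← hx2, hx1]
    show ((g' * (g₀ * n))⁻¹ * g) • z = z
    rw [mul_smul, hzz, ← mul_smul, inv_mul_cancel, one_smul]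
  set h : G := (g' * (g₀ * n))⁻¹ * g with hh
  have hg : g = g' * g₀ * n * h := by
    rw [hh]; group
  have hnorm := (Subgroup.mem_normalizer_iff.mp hn)
  ext a
  simp only [Set.mem_image, SetLike.mem_coe, Subgroup.mem_map, MulEquiv.coe_toMonoidHom,
    MulAut.conj_apply]
  constructor
  · rintro ⟨b, ⟨k, hk, rfl⟩, rfl⟩
    refine ⟨h⁻¹ * (n⁻¹ * k * n), ?_, ?_⟩
    · refine mul_mem (inv_mem hstab) ((hnorm (n⁻¹ * k * n)).mpr ?_)
      have e : n * (n⁻¹ * k * n) * n⁻¹ = k := by group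
      rw [e]; exact hk
    · rw [hg]; group
  · rintro ⟨k, hk, rfl⟩
    refine ⟨g₀ * (n * (h * k) * n⁻¹) * g₀⁻¹, ⟨n * (h * k) * n⁻¹, ?_, rfl⟩, ?_⟩
    · exact (hnorm (h * k)).mp (mul_mem hstab hk)
    · rw [hg]; group
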